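/- Let X be a real Banach space, and let ε > 0 and δ > 0 be such that for all f, g ∈ X* with ‖f‖ = 1, ‖g‖ = 1 and ε ≤ ‖f − g‖, one has ‖(f + g)/2‖ ≤ 1 − δ. Then for all x, y ∈ X with ‖x‖ = 1, ‖y‖ = 1 and ‖x − y‖ < δ, and all f, g ∈ X* with ‖f‖ = 1, ‖g‖ = 1, f(x) = 1 and g(y) = 1, one has ‖f − g‖ < ε. -/

import Mathlib

/-- Quantitative uniform continuity of the duality (norming functional) map: if `δ` is a
modulus of uniform convexity of `X*` at scale `ε`, then unit vectors `x, y` at distance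
less than `δ` have norming functionals at distance less than `ε`. -/
theorem norming_functional_uniform_continuity_modulus
    (X : Type*) [NormedAddCommGroup X] [NormedSpace ℝ X] [CompleteSpace X]
    (ε δ : ℝ) (hε : 0 < ε) (hδ : 0 < δ)
    (hmod : ∀ f g : StrongDual ℝ X, ‖f‖ = 1 → ‖g‖ = 1 → ε ≤ ‖f - g‖ →
      ‖(2⁻¹ : ℝ) • (f + g)‖ ≤ 1 - δ) :
    ∀ x y : X, ‖x‖ = 1 → ‖y‖ = 1 → ‖x - y‖ < δ →
      ∀ f g : StrongDual ℝ X, ‖f‖ = 1 → ‖g‖ = 1 → f x = 1 → g y = 1 →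
        ‖f - g‖ < ε := by
  intro x y hx hy hxy f g hf hg hfx hgy
  by_contra h
  push_neg at h
  have hbound := hmod f g hf hg h
  -- ‖(f+g)/2‖ ≤ 1 - δ, but ((f+g)/2) x > 1 - δ
  have h1 : g x = g y - g (y - x) := by simp
  have h2 : g (y - x) ≤ ‖y - x‖ := by
    calc g (y - x) ≤ ‖g (y - x)‖ := le_abs_self _
    _ ≤ ‖g‖ * ‖y - x‖ := g.le_opNorm _
    _ = ‖y - x‖ := by rw [hg, one_mul]
  have hyx : ‖y - x‖ < δ := by rwa [norm_sub_rev]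
  have hgx : 1 - δ < g x := by
    rw [h1, hgy]; linarith
  have h3 : ((2⁻¹ : ℝ) • (f + g)) x ≤ ‖(2⁻¹ : ℝ) • (f + g)‖ := by
    calc ((2⁻¹ : ℝ) • (f + g)) x ≤ ‖((2⁻¹ : ℝ) • (f + g)) x‖ := le_abs_self _
    _ ≤ ‖(2⁻¹ : ℝ) • (f + g)‖ * ‖x‖ := ContinuousLinearMap.le_opNorm _ _
    _ = ‖(2⁻¹ : ℝ) • (f + g)‖ := by rw [hx, mul_one]
  have h4 : ((2⁻¹ : ℝ) • (f + g)) x = 2⁻¹ * (f x + g x) := by simp; ring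
  rw [h4, hfx] at h3
  linarith
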